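/- Let $p : X \to Y$ be a quandle covering, $\mathbf{k}$ an integral domain, $y \in Y$, and suppose $|p^{-1}(y)| \geq 2$. Let $I_y$ be a finite subset of $p^{-1}(y)$ and $\alpha_x \in \mathbf{k}$ for $x \in I_y$ with $\sum_{x \in I_y} \alpha_x = 0$ and not all $\alpha_x$ zero. Then $u = \sum_{x \in I_y} \alpha_x e_x$ is a non-zero right zero-divisor in $\mathbf{k}[X]$: for every $w \in \mathbf{k}[X]$, $w u = 0$. -/

import Mathlib

/-- A quandle with the paper's (right-multiplication) convention:
`x * y = S_y(x)`, each `S_y` is an automorphism of the quandle fixing `y`. -/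
class Quandle' (Q : Type*) extends Mul Q where
  invMul : Q → Q → Q
  rightDist : ∀ x y z : Q, (x * y) * z = (x * z) * (y * z)
  invMul_mul : ∀ x y : Q, invMul (x * y) y = x
  mul_invMul : ∀ x y : Q, (invMul x y) * y = x
  mul_self : ∀ x : Q, x * x = x

/-- For a quandle covering, a combination `∑ α_x e_x` over a fibre with `∑ α_x = 0`
(and some `α_x ≠ 0`) is a non-zero right zero-divisor: `w · u = 0` for all `w`. -/
theorem stmt16 {Q R : Type*} [Quandle' Q] [Quandle' R] (p : Q → R)
    (hom : ∀ a b : Q, p (a * b) = p a * p b) (surj : Function.Surjective p)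
    (cov : ∀ x x' : Q, p x = p x' → ∀ z : Q, z * x = z * x')
    (k : Type*) [CommRing k] [IsDomain k]
    (y : R) (hfib : ∃ x x' : Q, x ≠ x' ∧ p x = y ∧ p x' = y)
    (I : Finset Q) (hI : ∀ x ∈ I, p x = y)
    (α : Q → k) (hsum : ∑ x ∈ I, α x = 0) (hne : ∃ x ∈ I, α x ≠ 0) :
    (∑ x ∈ I, α x • (MonoidAlgebra.single x (1 : k) : MonoidAlgebra k Q)) ≠ 0 ∧
    ∀ w : MonoidAlgebra k Q,
      w * (∑ x ∈ I, α x • (MonoidAlgebra.single x (1 : k) : MonoidAlgebra k Q)) = 0 := by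
  obtain ⟨x₀, hx₀I, hx₀⟩ := hne
  constructor
  · intro h
    apply hx₀
    have h0 : (∑ x ∈ I, α x • (MonoidAlgebra.single x (1 : k) : MonoidAlgebra k Q)).coeff x₀
        = α x₀ := by
      rw [MonoidAlgebra.coeff_sum, Finset.sum_apply', Finset.sum_eq_single x₀]
      · simp
      · intro b _ hb
        simp [MonoidAlgebra.coeff_single, Finsupp.single_apply, hb]
      · intro h'; exact absurd hx₀I h'
    rw [h] at h0
    simpa using h0.symm
  · intro w
    have key : ∀ x ∈ I, w * MonoidAlgebra.single x (1 : k)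
        = w * MonoidAlgebra.single x₀ (1 : k) := by
      intro x hx
      have hp : p x = p x₀ := by rw [hI x hx, hI x₀ hx₀I]
      rw [MonoidAlgebra.mul_def, MonoidAlgebra.mul_def]
      apply Finsupp.sum_congr
      intro a _
      rw [MonoidAlgebra.coeff_single, MonoidAlgebra.coeff_single]
      rw [Finsupp.sum_single_index (by simp), Finsupp.sum_single_index (by simp)]
      rw [cov x x₀ hp a]
    rw [Finset.mul_sum]
    calc ∑ x ∈ I, w * α x • MonoidAlgebra.single x (1 : k)
        = ∑ x ∈ I, α x • (w * MonoidAlgebra.single x₀ (1 : k)) := by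
          refine Finset.sum_congr rfl fun x hx => ?_
          rw [mul_smul_comm, key x hx]
      _ = (∑ x ∈ I, α x) • (w * MonoidAlgebra.single x₀ (1 : k)) := by
          rw [Finset.sum_smul]
      _ = 0 := by rw [hsum, zero_smul]
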